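/- The wrinkling-move structure matrix P (with P₁₂ = sy + 2ty + 2xz, P₁₃ = 2xy − (s+2t)z, P₁₄ = −2(y²+z²), P₂₃ = st + 2(t²+x²), P₂₄ = 2tz − 2xy, P₃₄ = 2(ty+xz), skew-symmetric) satisfies the Jacobi identity: for all i,j,k ∈ {1,2,3,4}, Σ_{l=1}^{4} (P^{lk} ∂_l P^{ij} + P^{li} ∂_l P^{jk} + P^{lj} ∂_l P^{ki}) = 0 identically on ℝ⁴. -/

import Mathlib

open Matrix

/-- Partial derivative in the `l`-th coordinate direction on `ℝ⁴`. -/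
noncomputable def pd (l : Fin 4) (g : (Fin 4 → ℝ) → ℝ) (p : Fin 4 → ℝ) : ℝ :=
  fderiv ℝ g p (Pi.single l 1)

/-- The wrinkling-move structure matrix as a matrix-valued function of
`p = (x,y,z,t) = (x₁,x₂,x₃,x₄)`, for a fixed parameter `s`. -/
noncomputable def wrinkleBivector (s : ℝ) (p : Fin 4 → ℝ) : Matrix (Fin 4) (Fin 4) ℝ :=
  !![0, s * p 1 + 2 * p 3 * p 1 + 2 * p 0 * p 2,
       2 * p 0 * p 1 - (s + 2 * p 3) * p 2, -(2 * ((p 1) ^ 2 + (p 2) ^ 2));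
     -(s * p 1 + 2 * p 3 * p 1 + 2 * p 0 * p 2), 0,
       s * p 3 + 2 * ((p 3) ^ 2 + (p 0) ^ 2), 2 * p 3 * p 2 - 2 * p 0 * p 1;
     -(2 * p 0 * p 1 - (s + 2 * p 3) * p 2), -(s * p 3 + 2 * ((p 3) ^ 2 + (p 0) ^ 2)),
       0, 2 * (p 3 * p 1 + p 0 * p 2);
     2 * ((p 1) ^ 2 + (p 2) ^ 2), -(2 * p 3 * p 2 - 2 * p 0 * p 1),
       -(2 * (p 3 * p 1 + p 0 * p 2)), 0]

lemma pd_const (l : Fin 4) (c : ℝ) (p : Fin 4 → ℝ) : pd l (fun _ => c) p = 0 := by simp [pd]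

lemma pd_coord (l m : Fin 4) (p : Fin 4 → ℝ) :
    pd l (fun q => q m) p = if m = l then 1 else 0 := by
  have : (fun q : Fin 4 → ℝ => q m) = (ContinuousLinearMap.proj m : (Fin 4 → ℝ) →L[ℝ] ℝ) := rfl
  rw [pd, this, ContinuousLinearMap.fderiv]; simp [Pi.single_apply]

lemma pd_add (l : Fin 4) (f g : (Fin 4 → ℝ) → ℝ) (p) (hf : DifferentiableAt ℝ f p)
    (hg : DifferentiableAt ℝ g p) :
    pd l (fun q => f q + g q) p = pd l f p + pd l g p := by simp [pd, fderiv_fun_add hf hg]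

lemma pd_sub (l : Fin 4) (f g : (Fin 4 → ℝ) → ℝ) (p) (hf : DifferentiableAt ℝ f p)
    (hg : DifferentiableAt ℝ g p) :
    pd l (fun q => f q - g q) p = pd l f p - pd l g p := by simp [pd, fderiv_fun_sub hf hg]

lemma pd_neg (l : Fin 4) (f : (Fin 4 → ℝ) → ℝ) (p) :
    pd l (fun q => -f q) p = -pd l f p := by simp [pd, fderiv_neg]

lemma pd_mul (l : Fin 4) (f g : (Fin 4 → ℝ) → ℝ) (p) (hf : DifferentiableAt ℝ f p)
    (hg : DifferentiableAt ℝ g p) :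
    pd l (fun q => f q * g q) p = f p * pd l g p + g p * pd l f p := by
  simp [pd, fderiv_fun_mul hf hg]

lemma pd_sq (l : Fin 4) (f : (Fin 4 → ℝ) → ℝ) (p) (hf : DifferentiableAt ℝ f p) :
    pd l (fun q => f q ^ 2) p = 2 * f p * pd l f p := by
  have : (fun q => f q ^ 2) = fun q => f q * f q := by funext q; ring
  rw [this, pd_mul l f f p hf hf]; ring

lemma pdw12 (s : ℝ) (l : Fin 4) (p : Fin 4 → ℝ) :
    pd l (fun q => s * q 1 + 2 * q 3 * q 1 + 2 * q 0 * q 2) p =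
      if l = 0 then 2 * p 2 else if l = 1 then s + 2 * p 3 else
      if l = 2 then 2 * p 0 else 2 * p 1 := by
  simp (disch := fun_prop) only [pd_add, pd_sub, pd_mul, pd_neg, pd_sq, pd_const, pd_coord]
  fin_cases l <;> simp <;> ring

lemma pdw13 (s : ℝ) (l : Fin 4) (p : Fin 4 → ℝ) :
    pd l (fun q => 2 * q 0 * q 1 - (s + 2 * q 3) * q 2) p =
      if l = 0 then 2 * p 1 else if l = 1 then 2 * p 0 else
      if l = 2 then -(s + 2 * p 3) else -(2 * p 2) := by
  simp (disch := fun_prop) only [pd_add, pd_sub, pd_mul, pd_neg, pd_sq, pd_const, pd_coord]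
  fin_cases l <;> simp <;> ring

lemma pdw14 (l : Fin 4) (p : Fin 4 → ℝ) :
    pd l (fun q => 2 * ((q 1) ^ 2 + (q 2) ^ 2)) p =
      if l = 0 then 0 else if l = 1 then 4 * p 1 else
      if l = 2 then 4 * p 2 else 0 := by
  simp (disch := fun_prop) only [pd_add, pd_sub, pd_mul, pd_neg, pd_sq, pd_const, pd_coord]
  fin_cases l <;> simp <;> ring

lemma pdw23 (s : ℝ) (l : Fin 4) (p : Fin 4 → ℝ) :
    pd l (fun q => s * q 3 + 2 * ((q 3) ^ 2 + (q 0) ^ 2)) p =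
      if l = 0 then 4 * p 0 else if l = 1 then 0 else
      if l = 2 then 0 else s + 4 * p 3 := by
  simp (disch := fun_prop) only [pd_add, pd_sub, pd_mul, pd_neg, pd_sq, pd_const, pd_coord]
  fin_cases l <;> simp <;> ring

lemma pdw24 (l : Fin 4) (p : Fin 4 → ℝ) :
    pd l (fun q => 2 * q 3 * q 2 - 2 * q 0 * q 1) p =
      if l = 0 then -(2 * p 1) else if l = 1 then -(2 * p 0) else
      if l = 2 then 2 * p 3 else 2 * p 2 := by
  simp (disch := fun_prop) only [pd_add, pd_sub, pd_mul, pd_neg, pd_sq, pd_const, pd_coord]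
  fin_cases l <;> simp <;> ring

lemma pdw34 (l : Fin 4) (p : Fin 4 → ℝ) :
    pd l (fun q => 2 * (q 3 * q 1 + q 0 * q 2)) p =
      if l = 0 then 2 * p 2 else if l = 1 then 2 * p 3 else
      if l = 2 then 2 * p 0 else 2 * p 1 := by
  simp (disch := fun_prop) only [pd_add, pd_sub, pd_mul, pd_neg, pd_sq, pd_const, pd_coord]
  fin_cases l <;> simp <;> ring

set_option maxHeartbeats 1000000 in
/-- The wrinkling-move structure matrix satisfies the Jacobi identity:
for all `i,j,k`, `Σ_l (P^{lk} ∂_l P^{ij} + P^{li} ∂_l P^{jk} + P^{lj} ∂_l P^{ki}) = 0`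
identically on `ℝ⁴`. -/
theorem wrinkle_jacobi (s : ℝ) :
    ∀ (i j k : Fin 4) (p : Fin 4 → ℝ),
      ∑ l : Fin 4,
        (wrinkleBivector s p l k * pd l (fun q => wrinkleBivector s q i j) p +
         wrinkleBivector s p l i * pd l (fun q => wrinkleBivector s q j k) p +
         wrinkleBivector s p l j * pd l (fun q => wrinkleBivector s q k i) p) = 0 := by
  intro i j k p
  have h : ∀ m : Fin 4, m = 0 ∨ m = 1 ∨ m = 2 ∨ m = 3 := by decide
  rcases h i with rfl | rfl | rfl | rfl <;> rcases h j with rfl | rfl | rfl | rfl <;>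
    rcases h k with rfl | rfl | rfl | rfl <;>
  · simp only [wrinkleBivector, Fin.sum_univ_four, Matrix.cons_val', Matrix.cons_val_zero,
      Matrix.cons_val_one, Matrix.head_cons, Matrix.empty_val', Matrix.cons_val_fin_one,
      Matrix.cons_val_two, Matrix.tail_cons, Matrix.cons_val_three, Matrix.of_apply,
      Matrix.head_fin_const]
    simp only [pd_neg, pd_const, pdw12, pdw13, pdw14, pdw23, pdw24, pdw34,
      Fin.reduceEq, reduceIte]
    ring
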